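/- Let d ≥ 1 and let h⁰, h^L ∈ ℝ^d be linearly independent. Suppose an L-layer network's features evolve linearly across layers: h^(ℓ) = (1 - ℓ/L)·h⁰ + (ℓ/L)·h^L for ℓ = 0, 1, …, L. Then for any layers ℓ₁ < ℓ₂ < ℓ₃ (with 0 ≤ ℓ₁, ℓ₃ ≤ L), all the features h^(ℓ) are nonzero and COS(h^(ℓ₁), h^(ℓ₃)) < COS(h^(ℓ₂), h^(ℓ₃)). -/

import Mathlib

open scoped RealInnerProductSpace

lemma cos_aux (A B C : ℝ) (hA : 0 < A) (hC : 0 < C) (hD : B^2 < A*C) :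
    StrictMonoOn (fun c : ℝ => (A + c*B)/Real.sqrt (A + 2*c*B + c^2*C)) (Set.Iic 0) := by
  have hQ : ∀ c : ℝ, 0 < A + 2*c*B + c^2*C := by
    intro c
    nlinarith [sq_nonneg (C*c + B), sq_nonneg c]
  apply strictMonoOn_of_deriv_pos (convex_Iic 0)
  · apply ContinuousOn.div
    · fun_prop
    · fun_prop
    · intro x _
      exact (Real.sqrt_pos.2 (hQ x)).ne'
  · intro x hx
    rw [interior_Iic] at hx
    have hQx := hQ x
    have hs : 0 < Real.sqrt (A + 2*x*B + x^2*C) := Real.sqrt_pos.2 hQx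
    have hs2 : Real.sqrt (A + 2*x*B + x^2*C) ^ 2 = A + 2*x*B + x^2*C :=
      Real.sq_sqrt hQx.le
    have hd1 : HasDerivAt (fun c : ℝ => A + c*B) B x := by
      simpa using ((hasDerivAt_id x).mul_const B).const_add A
    have hd2 : HasDerivAt (fun c : ℝ => A + 2*c*B + c^2*C)
        (2*B + 2*x*C) x := by
      have h1 : HasDerivAt (fun c : ℝ => A + 2*c*B) (2*B) x := by
        simpa [mul_assoc] using (((hasDerivAt_id x).const_mul 2).mul_const B).const_add A
      have h2 : HasDerivAt (fun c : ℝ => c^2*C) (2*x*C) x := by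
        simpa using ((hasDerivAt_pow 2 x).mul_const C)
      exact h1.add h2
    have hd3 : HasDerivAt (fun c : ℝ => Real.sqrt (A + 2*c*B + c^2*C))
        ((2*B + 2*x*C) / (2 * Real.sqrt (A + 2*x*B + x^2*C))) x := by
      have := (Real.hasDerivAt_sqrt hQx.ne').comp x hd2
      simpa [mul_comm, div_eq_mul_inv, Function.comp_def] using this
    have hd : HasDerivAt (fun c : ℝ => (A + c*B)/Real.sqrt (A + 2*c*B + c^2*C))
        ((B * Real.sqrt (A + 2*x*B + x^2*C) -
          (A + x*B) * ((2*B + 2*x*C) / (2 * Real.sqrt (A + 2*x*B + x^2*C)))) /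
          (Real.sqrt (A + 2*x*B + x^2*C))^2) x := hd1.div hd3 hs.ne'
    rw [hd.deriv]
    have key : B * Real.sqrt (A + 2*x*B + x^2*C) -
        (A + x*B) * ((2*B + 2*x*C) / (2 * Real.sqrt (A + 2*x*B + x^2*C)))
        = x*(B^2 - A*C) / Real.sqrt (A + 2*x*B + x^2*C) := by
      generalize Real.sqrt (A + 2*x*B + x^2*C) = s at hs hs2 ⊢
      field_simp
      linear_combination B * hs2
    rw [key]
    have hnum : 0 < x*(B^2 - A*C) := by nlinarith [hx.out]
    positivity

lemma sq_inner_lt_of_linIndep {E : Type*} [NormedAddCommGroup E] [InnerProductSpace ℝ E]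
    {v w : E} (h : LinearIndependent ℝ ![v, w]) :
    ⟪w, v⟫^2 < ‖v‖^2 * ‖w‖^2 := by
  have hp := LinearIndependent.pair_iff.mp h
  have hv : v ≠ 0 := by
    intro hv0
    simpa [hv0] using (hp 1 0 (by simp [hv0])).1
  have h1 : ⟪w, v⟫ < ‖w‖ * ‖v‖ := by
    rw [inner_lt_norm_mul_iff_real]
    intro heq
    have := hp (-‖w‖) ‖v‖ (by rw [neg_smul, heq]; abel)
    exact hv (norm_eq_zero.mp this.2)
  have h2 : -⟪w, v⟫ < ‖w‖ * ‖v‖ := by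
    have : ⟪-w, v⟫ < ‖-w‖ * ‖v‖ := by
      rw [inner_lt_norm_mul_iff_real]
      intro heq
      rw [smul_neg, norm_neg] at heq
      have hw : w ≠ 0 := by
        intro h0
        simpa [h0] using (hp 0 1 (by simp [h0])).2
      have := hp ‖w‖ ‖v‖ (by rw [← neg_eq_iff_eq_neg.mpr heq.symm]; abel)
      exact hw (norm_eq_zero.mp this.1)
    simpa using this
  nlinarith [mul_nonneg (norm_nonneg w) (norm_nonneg v)]

theorem representation_similarity_increases
    (d L : ℕ) (hd : 1 ≤ d) (h₀ hL : EuclideanSpace ℝ (Fin d))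
    (hind : LinearIndependent ℝ ![h₀, hL])
    (feat : ℕ → EuclideanSpace ℝ (Fin d))
    (hfeat : ∀ ℓ : ℕ, ℓ ≤ L →
      feat ℓ = (1 - (ℓ : ℝ) / (L : ℝ)) • h₀ + ((ℓ : ℝ) / (L : ℝ)) • hL)
    (ℓ₁ ℓ₂ ℓ₃ : ℕ) (h₁₂ : ℓ₁ < ℓ₂) (h₂₃ : ℓ₂ < ℓ₃) (h₃L : ℓ₃ ≤ L) :
    (∀ ℓ : ℕ, ℓ ≤ L → feat ℓ ≠ 0) ∧
    ⟪feat ℓ₁, feat ℓ₃⟫ / (‖feat ℓ₁‖ * ‖feat ℓ₃‖) <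
      ⟪feat ℓ₂, feat ℓ₃⟫ / (‖feat ℓ₂‖ * ‖feat ℓ₃‖) := by
  have hp := LinearIndependent.pair_iff.mp hind
  have hLpos : (0:ℝ) < L := by
    have : 0 < L := lt_of_lt_of_le (Nat.zero_lt_of_lt (h₁₂.trans h₂₃)) h₃L
    exact_mod_cast this
  have hLne : (L:ℝ) ≠ 0 := hLpos.ne'
  have hnz : ∀ ℓ : ℕ, ℓ ≤ L → feat ℓ ≠ 0 := by
    intro ℓ hℓ h0
    rw [hfeat ℓ hℓ] at h0
    obtain ⟨e1, e2⟩ := hp _ _ h0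
    rw [e2] at e1
    norm_num at e1
  refine ⟨hnz, ?_⟩
  set v := feat ℓ₃ with hv
  set w := hL - h₀ with hwdef
  have hvne : v ≠ 0 := hnz ℓ₃ h₃L
  have hwne : w ≠ 0 := by
    intro h0
    simpa using (hp (-1) 1 (by rw [← h0, hwdef]; module)).2
  set A := ‖v‖^2 with hA
  set B := ⟪w, v⟫ with hB
  set C := ‖w‖^2 with hC
  have hApos : 0 < A := pow_pos (norm_pos_iff.mpr hvne) 2
  have hCpos : 0 < C := pow_pos (norm_pos_iff.mpr hwne) 2
  have hlin : LinearIndependent ℝ ![v, w] := by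
    rw [LinearIndependent.pair_iff]
    intro a b hab
    rw [hv, hfeat ℓ₃ h₃L, hwdef] at hab
    have hab' : (a * (1 - (ℓ₃:ℝ)/L) - b) • h₀ + (a * ((ℓ₃:ℝ)/L) + b) • hL = 0 := by
      rw [← hab]; module
    obtain ⟨e1, e2⟩ := hp _ _ hab'
    constructor
    · have : a * (1 - (ℓ₃:ℝ)/L) + a * ((ℓ₃:ℝ)/L) = 0 := by linarith
      have ha : a * 1 = 0 := by linear_combination this
      linarith
    · have ha : a = 0 := by
        have : a * (1 - (ℓ₃:ℝ)/L) + a * ((ℓ₃:ℝ)/L) = 0 := by linarith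
        have ha : a * 1 = 0 := by linear_combination this
        linarith
      rw [ha] at e2; linarith [e2]
  have hD : B^2 < A * C := sq_inner_lt_of_linIndep hlin
  -- express feat ℓᵢ as v + c • w
  have hfe : ∀ ℓ : ℕ, ℓ ≤ L → feat ℓ = v + (((ℓ:ℝ) - ℓ₃)/L) • w := by
    intro ℓ hℓ
    rw [hfeat ℓ hℓ, hv, hfeat ℓ₃ h₃L, hwdef]
    match_scalars <;> field_simp <;> ring
  have hinner : ∀ c : ℝ, ⟪v + c • w, v⟫ = A + c * B := by
    intro c
    rw [inner_add_left, real_inner_smul_left, hA, hB, real_inner_self_eq_norm_sq]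
  have hnorm : ∀ c : ℝ, ‖v + c • w‖ = Real.sqrt (A + 2*c*B + c^2*C) := by
    intro c
    have hsq : ‖v + c • w‖^2 = A + 2*c*B + c^2*C := by
      rw [norm_add_sq_real, norm_smul, real_inner_smul_right]
      rw [hA, hB, hC, real_inner_comm]
      rw [mul_pow, Real.norm_eq_abs, sq_abs]
      ring
    rw [← hsq, Real.sqrt_sq (norm_nonneg _)]
  have hc1 : ((ℓ₁:ℝ) - ℓ₃)/L < ((ℓ₂:ℝ) - ℓ₃)/L := by
    apply div_lt_div_of_pos_right ?_ hLpos
    have : (ℓ₁:ℝ) < ℓ₂ := by exact_mod_cast h₁₂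
    linarith
  have hc2 : ((ℓ₂:ℝ) - ℓ₃)/L ≤ 0 := by
    apply div_nonpos_of_nonpos_of_nonneg ?_ hLpos.le
    have : (ℓ₂:ℝ) < ℓ₃ := by exact_mod_cast h₂₃
    linarith
  have hmono := cos_aux A B C hApos hCpos hD
    (Set.mem_Iic.mpr (le_of_lt (lt_of_lt_of_le hc1 hc2)))
    (Set.mem_Iic.mpr hc2) hc1
  rw [hfe ℓ₁ (le_of_lt (lt_of_lt_of_le (h₁₂.trans h₂₃) h₃L)),
      hfe ℓ₂ (le_of_lt (lt_of_lt_of_le h₂₃ h₃L))]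
  rw [hinner, hinner, hnorm, hnorm]
  have hvnorm : 0 < ‖v‖ := norm_pos_iff.mpr hvne
  rw [← div_div, ← div_div]
  exact div_lt_div_of_pos_right hmono hvnorm
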